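/- Let (G, τ) be a Hausdorff SIN first-countable paratopological group and let {Uₙ : n ∈ ℕ} be a decreasing countable base of open neighborhoods of the identity e. Then there is a topology τ* on G, coarser than τ, such that for each x ∈ G the family {x·Uₙ·Uₙ⁻¹ : n ∈ ℕ} is a neighborhood base at x for τ*, and (G, τ*) is a metrizable topological group (in particular, the inverse operation is τ*-continuous). -/

import Mathlib

open Topology Pointwise Filter Set

section AuxSIN

variable {G : Type*} [Group G] [t : TopologicalSpace G] [T2Space G] [ContinuousMul G]

private theorem sin_aux_antitone (U : ℕ → Set G) (hdec : ∀ n, U (n + 1) ⊆ U n) :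
    ∀ {m n : ℕ}, m ≤ n → U n ⊆ U m := by
  intro m n h
  induction h with
  | refl => exact subset_rfl
  | step _ ih => exact fun x hx => ih (hdec _ hx)

/-- Existence of a smaller `U k` with `U k * U k ⊆ U n`. -/
private theorem sin_aux_sq (U : ℕ → Set G) (hbase : (𝓝 (1 : G)).HasBasis (fun _ : ℕ => True) U)
    (n : ℕ) : ∃ k, U k * U k ⊆ U n := by
  have hUn : U n ∈ 𝓝 (1 : G) := hbase.mem_of_mem trivial
  have hmul : Tendsto (fun p : G × G => p.1 * p.2) (𝓝 ((1 : G), (1 : G))) (𝓝 (1 : G)) := by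
    simpa using (continuous_mul (M := G)).tendsto ((1 : G), (1 : G))
  have hpre : (fun p : G × G => p.1 * p.2) ⁻¹' U n ∈ 𝓝 ((1 : G), (1 : G)) := hmul hUn
  rw [nhds_prod_eq, Filter.mem_prod_iff] at hpre
  obtain ⟨A, hA, B, hB, hAB⟩ := hpre
  obtain ⟨k, -, hk⟩ := hbase.mem_iff.1 (Filter.inter_mem hA hB)
  refine ⟨k, ?_⟩
  rintro x ⟨a, ha, b, hb, rfl⟩
  exact hAB (Set.mk_mem_prod (hk ha).1 (hk hb).2)

end AuxSIN

/-- Let `(G, τ)` be a Hausdorff SIN first-countable paratopological group and let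
`{Uₙ : n ∈ ℕ}` be a decreasing countable base of open neighborhoods of the identity.
Then there is a topology `τ*` on `G`, coarser than `τ`, such that for each `x ∈ G`
the family `{x • (Uₙ * Uₙ⁻¹) : n ∈ ℕ}` is a neighborhood base at `x` for `τ*`, and
`(G, τ*)` is a metrizable topological group. -/
theorem SIN_firstCountable_coarser_metrizable_group_topology
    {G : Type*} [Group G] [t : TopologicalSpace G] [T2Space G] [ContinuousMul G]
    [FirstCountableTopology G]
    (hSIN : ∀ U ∈ 𝓝 (1 : G), ∃ V ∈ 𝓝 (1 : G), ∀ x : G, ∀ v ∈ V, x * v * x⁻¹ ∈ U)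
    (U : ℕ → Set G)
    (hopen : ∀ n, IsOpen (U n)) (hmem : ∀ n, (1 : G) ∈ U n)
    (hdec : ∀ n, U (n + 1) ⊆ U n)
    (hbase : (𝓝 (1 : G)).HasBasis (fun _ : ℕ => True) U) :
    ∃ t' : TopologicalSpace G, t ≤ t' ∧
      (∀ x : G, (@nhds G t' x).HasBasis (fun _ : ℕ => True)
        (fun n => x • (U n * (U n)⁻¹))) ∧
      @TopologicalSpace.MetrizableSpace G t' ∧
      @IsTopologicalGroup G t' _ := by
  classical
  set V : ℕ → Set G := fun n => U n * (U n)⁻¹ with hV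
  have hUanti : ∀ {m n : ℕ}, m ≤ n → U n ⊆ U m := sin_aux_antitone U hdec
  have hVanti : ∀ {m n : ℕ}, m ≤ n → V n ⊆ V m := by
    intro m n h
    exact Set.mul_subset_mul (hUanti h) (Set.inv_subset_inv.2 (hUanti h))
  have hsub : ∀ W ∈ 𝓝 (1 : G), ∃ m, U m ⊆ W := fun W hW => by
    obtain ⟨m, -, hm⟩ := hbase.mem_iff.1 hW; exact ⟨m, hm⟩
  have h1V : ∀ n, (1 : G) ∈ V n := fun n =>
    ⟨1, hmem n, 1, by simpa using hmem n, by simp⟩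
  -- symmetry of V n
  have hVsymm : ∀ n, ∀ g ∈ V n, g⁻¹ ∈ V n := by
    rintro n g ⟨a, ha, b, hb, rfl⟩
    exact ⟨b⁻¹, Set.mem_inv.1 hb, a⁻¹, Set.inv_mem_inv.2 ha, by simp [mul_inv_rev]⟩
  -- key: V m * V m ⊆ V n for suitable m
  have hVmul : ∀ n, ∃ m, V m * V m ⊆ V n := by
    intro n
    obtain ⟨k, hk⟩ := sin_aux_sq U hbase n
    obtain ⟨W, hWnhds, hWconj⟩ := hSIN (U k) (hbase.mem_of_mem trivial)
    obtain ⟨m, hm⟩ := hsub (W ∩ U k) (Filter.inter_mem hWnhds (hbase.mem_of_mem trivial))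
    refine ⟨m, ?_⟩
    rintro x ⟨g, ⟨a, ha, b, hb, rfl⟩, h, ⟨c, hc, d, hd, rfl⟩, rfl⟩
    rw [Set.mem_inv] at hb hd
    have hbm : b⁻¹ ∈ U m := hb
    have hdm : d⁻¹ ∈ U m := hd
    have key : a * b * (c * d) = (a * (b * c * b⁻¹)) * (d⁻¹ * b⁻¹)⁻¹ := by
      group
    have h1 : a * (b * c * b⁻¹) ∈ U n := by
      apply hk
      exact ⟨a, (hm ha).2, b * c * b⁻¹, hWconj b c (hm hc).1, rfl⟩
    have h2 : d⁻¹ * b⁻¹ ∈ U n := hk ⟨d⁻¹, (hm hdm).2, b⁻¹, (hm hbm).2, rfl⟩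
    show a * b * (c * d) ∈ V n
    rw [key]
    exact ⟨_, h1, _, Set.inv_mem_inv.2 h2, rfl⟩
  -- conjugation
  have hVconj : ∀ (x₀ : G) (n : ℕ), ∃ m, ∀ g ∈ V m, x₀ * g * x₀⁻¹ ∈ V n := by
    intro x₀ n
    obtain ⟨W, hWnhds, hWconj⟩ := hSIN (U n) (hbase.mem_of_mem trivial)
    obtain ⟨m, hm⟩ := hsub W hWnhds
    refine ⟨m, ?_⟩
    rintro g ⟨a, ha, b, hb, rfl⟩
    rw [Set.mem_inv] at hb
    have key : x₀ * (a * b) * x₀⁻¹ = (x₀ * a * x₀⁻¹) * (x₀ * b⁻¹ * x₀⁻¹)⁻¹ := by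
      group
    rw [key]
    exact ⟨_, hWconj x₀ a (hm ha), _, Set.inv_mem_inv.2 (hWconj x₀ b⁻¹ (hm hb)), rfl⟩
  -- the group filter basis
  let B : GroupFilterBasis G :=
    { sets := Set.range V
      nonempty := ⟨V 0, ⟨0, rfl⟩⟩
      inter_sets := by
        rintro _ _ ⟨m, rfl⟩ ⟨n, rfl⟩
        exact ⟨V (max m n), ⟨max m n, rfl⟩,
          Set.subset_inter (hVanti (le_max_left m n)) (hVanti (le_max_right m n))⟩
      one' := by rintro _ ⟨n, rfl⟩; exact h1V n
      mul' := by
        rintro _ ⟨n, rfl⟩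
        obtain ⟨m, hm⟩ := hVmul n
        exact ⟨V m, ⟨m, rfl⟩, hm⟩
      inv' := by
        rintro _ ⟨n, rfl⟩
        exact ⟨V n, ⟨n, rfl⟩, fun g hg => hVsymm n g hg⟩
      conj' := by
        rintro x₀ _ ⟨n, rfl⟩
        obtain ⟨m, hm⟩ := hVconj x₀ n
        exact ⟨V m, ⟨m, rfl⟩, fun g hg => hm g hg⟩ }
  -- intersection of the V n is {1}
  have hsep : ∀ g : G, (∀ n, g ∈ V n) → g = 1 := by
    intro g hg
    by_contra hne
    obtain ⟨A, B', hA, hB', hgA, h1B', hdisj⟩ := t2_separation hne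
    have htend : Filter.Tendsto (fun y => g * y) (𝓝 (1 : G)) (𝓝 g) := by
      simpa using (continuous_mul_left g).tendsto (1 : G)
    have hpre : (fun y => g * y) ⁻¹' A ∈ 𝓝 (1 : G) := htend (hA.mem_nhds hgA)
    obtain ⟨n, hn⟩ := hsub (((fun y => g * y) ⁻¹' A) ∩ B')
      (Filter.inter_mem hpre (hB'.mem_nhds h1B'))
    obtain ⟨a, ha, b, hb, hab⟩ := hg n
    rw [Set.mem_inv] at hb
    have h1 : g * b⁻¹ ∈ A := (hn hb).1
    have h2 : a ∈ B' := (hn ha).2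
    have : g * b⁻¹ = a := by rw [← hab]; group
    rw [this] at h1
    exact (Set.disjoint_iff.1 hdisj) ⟨h1, h2⟩ |>.elim
  letI t' : TopologicalSpace G := B.topology
  haveI htg : @IsTopologicalGroup G t' _ := B.isTopologicalGroup
  -- the neighborhood basis statement
  have hnhds : ∀ x : G, (@nhds G t' x).HasBasis (fun _ : ℕ => True) (fun n => x • V n) := by
    intro x
    have h := B.nhds_hasBasis x
    refine h.to_hasBasis ?_ ?_
    · rintro _ ⟨n, rfl⟩
      refine ⟨n, trivial, ?_⟩
      intro y hy
      exact ⟨x⁻¹ * y, by simpa [Set.mem_smul_set_iff_inv_smul_mem, smul_eq_mul] using hy, by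
        simp [smul_eq_mul, mul_assoc]⟩
    · intro n _
      refine ⟨V n, ⟨n, rfl⟩, ?_⟩
      rintro _ ⟨y, hy, rfl⟩
      exact Set.smul_mem_smul_set hy
  -- T0
  haveI hT0 : @T0Space G t' := by
    refine @t0Space_iff_inseparable G t' |>.2 fun x y hxy => ?_
    have hy : ∀ n, y ∈ x • V n := fun n =>
      mem_of_mem_nhds (hxy ▸ (hnhds x).mem_of_mem trivial)
    have : x⁻¹ * y = 1 := hsep _ fun n => by
      simpa [Set.mem_smul_set_iff_inv_smul_mem, smul_eq_mul] using hy n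
    have := congrArg (x * ·) this
    simpa [mul_assoc] using this.symm
  -- first countable
  haveI hfc : @FirstCountableTopology G t' :=
    @FirstCountableTopology.mk G t' fun x => (hnhds x).isCountablyGenerated
  -- metrizable
  letI u : UniformSpace G := @IsTopologicalGroup.rightUniformSpace G _ t' htg
  haveI hcg : (@uniformity G u).IsCountablyGenerated := by
    have : @uniformity G u = Filter.comap (fun p : G × G => p.2 / p.1) (@nhds G t' 1) := by
      simp only [div_eq_mul_inv]; rfl
    rw [this]
    haveI : (@nhds G t' 1).IsCountablyGenerated := (hnhds 1).isCountablyGenerated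
    exact Filter.comap.isCountablyGenerated _ _
  have hmetr : @TopologicalSpace.MetrizableSpace G t' :=
    @UniformSpace.metrizableSpace G u hcg hT0
  refine ⟨t', ?_, hnhds, hmetr, htg⟩
  -- coarser
  rw [le_iff_nhds]
  intro x
  rw [(hnhds x).ge_iff]
  intro n _
  have hxopen : @IsOpen G t (x • U n) := by
    have h := (@isOpenMap_mul_left G t _ _ x) (U n) (hopen n)
    have himg : (fun y => x * y) '' U n = x • U n := by
      ext z
      constructor
      · rintro ⟨y, hy, rfl⟩; exact ⟨y, hy, rfl⟩
      · rintro ⟨y, hy, rfl⟩; exact ⟨y, hy, rfl⟩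
    rwa [himg] at h
  have hxmem : x ∈ x • U n := ⟨1, hmem n, by simp⟩
  have hsub' : x • U n ⊆ x • V n := Set.smul_set_mono fun a ha =>
    ⟨a, ha, 1, by simpa using hmem n, by simp⟩
  have hm2 : x • U n ∈ @nhds G t x := by
    rw [@mem_nhds_iff G t x (x • U n)]
    exact ⟨x • U n, subset_rfl, hxopen, hxmem⟩
  exact Filter.mem_of_superset hm2 hsub'
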